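/- arXiv:1110.0363 — 3 statements merged into one kernel-verified Lean document; each statement's English description precedes it below -/
import Mathlib

section
/- Let A be a subalgebra of S(𝔤) such that its quotient field Q(A) is a maximal Poisson commutative subfield of R(𝔤). Then the Poisson commutant A' = {f ∈ S(𝔤) : {f,a} = 0 for all a ∈ A} equals Q(A) ∩ S(𝔤); A' is a maximal Poisson commutative subalgebra of S(𝔤); and Q(A') = Q(A). -/
open MvPolynomial

noncomputable section

namespace PoissonPaper

variable (k : Type*) [Field k]
variable (L : Type*) [LieRing L] [LieAlgebra k L]

/-- The stabilizer `𝔤(ξ) = {x ∈ 𝔤 ∣ ξ([x,y]) = 0 for all y ∈ 𝔤}` of a linear functional. -/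
def lieStab (ξ : Module.Dual k L) : Submodule k L where
  carrier := {x | ∀ y : L, ξ ⁅x, y⁆ = 0}
  add_mem' := by
    intro a b ha hb y
    rw [Set.mem_setOf_eq] at *
    rw [add_lie, map_add, ha y, hb y, add_zero]
  zero_mem' := by
    intro y
    rw [zero_lie, map_zero]
  smul_mem' := by
    intro c a ha y
    rw [Set.mem_setOf_eq] at *
    rw [smul_lie, map_smul, ha y, smul_zero]

/-- The index `i(𝔤)`: the minimal dimension of a stabilizer `𝔤(ξ)`, `ξ ∈ 𝔤*`. -/
def lieIndex : ℕ :=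
  sInf (Set.range fun ξ : Module.Dual k L => Module.finrank k (lieStab k L ξ))

/-- `c(𝔤) = (dim 𝔤 + i(𝔤))/2`. -/
def cIndex : ℕ := (Module.finrank k L + lieIndex k L) / 2

/-- `ξ ∈ 𝔤*` is regular if `dim 𝔤(ξ) = i(𝔤)`. -/
def IsRegularForm (ξ : Module.Dual k L) : Prop :=
  Module.finrank k (lieStab k L ξ) = lieIndex k L

/-- The Frobenius semi-radical `F(𝔤) = Σ_{ξ regular} 𝔤(ξ)`. -/
def frobSemiradical : Submodule k L :=
  ⨆ ξ ∈ {ξ : Module.Dual k L | IsRegularForm k L ξ}, lieStab k L ξ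

/-- A commutative polarization: a commutative Lie subalgebra of dimension `c(𝔤)`. -/
def IsCP (H : LieSubalgebra k L) : Prop :=
  (∀ x ∈ H, ∀ y ∈ H, ⁅x, y⁆ = 0) ∧ Module.finrank k H = cIndex k L

/-- `𝔤` is unimodular if `tr (ad x) = 0` for all `x`. -/
def IsUnimodular : Prop :=
  ∀ x : L, LinearMap.trace k L (LieAlgebra.ad k L x) = 0

variable {k L}
variable {n : ℕ} (b : Module.Basis (Fin n) k L)

/-- The linear polynomial in `S(𝔤) = k[x₁,…,xₙ]` attached to an element `x ∈ 𝔤`. -/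
def toPoly (x : L) : MvPolynomial (Fin n) k := ∑ i, C (b.repr x i) * X i

/-- The structure matrix `([xᵢ, xⱼ])` with entries in `S(𝔤)`. -/
def structMat : Matrix (Fin n) (Fin n) (MvPolynomial (Fin n) k) :=
  Matrix.of fun i j => toPoly b ⁅b i, b j⁆

/-- The Poisson bracket `{f,g} = Σᵢⱼ [xᵢ,xⱼ] ∂f/∂xᵢ ∂g/∂xⱼ` on `S(𝔤)`. -/
def pbr (f g : MvPolynomial (Fin n) k) : MvPolynomial (Fin n) k :=
  ∑ i, ∑ j, structMat b i j * pderiv i f * pderiv j g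

/-- The Poisson center `Y(𝔤) = {f ∈ S(𝔤) ∣ {x,f} = 0 for all x ∈ 𝔤}`. -/
def poissonCenter : Set (MvPolynomial (Fin n) k) :=
  {f | ∀ x : L, pbr b (toPoly b x) f = 0}

/-- A subset of `S(𝔤)` is Poisson commutative if all brackets vanish. -/
def PoissonCommutativeSet (A : Set (MvPolynomial (Fin n) k)) : Prop :=
  ∀ f ∈ A, ∀ g ∈ A, pbr b f g = 0

/-- A maximal Poisson commutative subalgebra of `S(𝔤)`. -/
def IsMaxPoissonCommutative (A : Subalgebra k (MvPolynomial (Fin n) k)) : Prop :=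
  PoissonCommutativeSet b (A : Set (MvPolynomial (Fin n) k)) ∧
    ∀ B : Subalgebra k (MvPolynomial (Fin n) k),
      PoissonCommutativeSet b (B : Set (MvPolynomial (Fin n) k)) → A ≤ B → A = B

/-- `A ⊆ S(𝔤)` has transcendence degree `r` over `k`. -/
def HasTrdeg (A : Set (MvPolynomial (Fin n) k)) (r : ℕ) : Prop :=
  (∃ f : Fin r → MvPolynomial (Fin n) k, (∀ i, f i ∈ A) ∧ AlgebraicIndependent k f) ∧
    ∀ (m : ℕ) (f : Fin m → MvPolynomial (Fin n) k),
      (∀ i, f i ∈ A) → AlgebraicIndependent k f → m ≤ r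

/-- `f` is a semi-invariant of weight `λ`: `ad x (f) = λ(x) f` for all `x ∈ 𝔤`. -/
def IsSemiInvariantWt (lam : Module.Dual k L) (f : MvPolynomial (Fin n) k) : Prop :=
  ∀ x : L, pbr b (toPoly b x) f = C (lam x) * f

/-- `𝔤` has no proper semi-invariants in `S(𝔤)`. -/
def HasNoProperSemiInvariants : Prop :=
  ∀ (lam : Module.Dual k L) (f : MvPolynomial (Fin n) k),
    f ≠ 0 → IsSemiInvariantWt b lam f → lam = 0

/-- The set of `t×t` minors of the structure matrix, where `t = dim 𝔤 - i(𝔤)`. -/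
def minorSet : Set (MvPolynomial (Fin n) k) :=
  {d | ∃ r c : Fin (Module.finrank k L - lieIndex k L) → Fin n,
      Function.Injective r ∧ Function.Injective c ∧
        d = ((structMat b).submatrix r c).det}

/-- `p` is the fundamental semi-invariant of `𝔤` (characterized, up to a nonzero scalar,
by `p²` being a greatest common divisor of the `t×t` minors of the structure matrix,
i.e. `p` is the gcd of the Pfaffians of the principal `t×t` minors). -/
def IsFundSemiInvariant (p : MvPolynomial (Fin n) k) : Prop :=
  (∀ d ∈ minorSet b, p ^ 2 ∣ d) ∧
    ∀ q : MvPolynomial (Fin n) k, (∀ d ∈ minorSet b, q ∣ d) → q ∣ p ^ 2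

/-- The ideal of polynomial functions on `𝔤*` vanishing on the singular set `𝔤*_sing`. -/
def singVanishingIdeal : Ideal (MvPolynomial (Fin n) k) where
  carrier := {f | ∀ ξ : Module.Dual k L, ¬ IsRegularForm k L ξ →
      eval (fun i => ξ (b i)) f = 0}
  add_mem' := by
    intro f g hf hg ξ hξ
    rw [Set.mem_setOf_eq] at *
    rw [map_add, hf ξ hξ, hg ξ hξ, add_zero]
  zero_mem' := by
    intro ξ hξ
    rw [map_zero]
  smul_mem' := by
    intro c f hf ξ hξ
    rw [Set.mem_setOf_eq] at *
    rw [smul_eq_mul, map_mul, hf ξ hξ, mul_zero]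

/-- The dimension of (the Zariski closure of) the singular set `𝔤*_sing ⊆ 𝔤*`. -/
def singDim : WithBot ℕ∞ :=
  ringKrullDim (MvPolynomial (Fin n) k ⧸ singVanishingIdeal b)

/-- `𝔤` is singular if `codim 𝔤*_sing = 1`, i.e. `dim 𝔤*_sing = dim 𝔤 - 1`. -/
def IsSingular : Prop :=
  singDim b + 1 = ((Module.finrank k L : ℕ∞) : WithBot ℕ∞)

/-- `𝔤` is coregular if the Poisson center `Y(𝔤)` is a polynomial algebra. -/
def IsCoregular : Prop :=
  ∃ (r : ℕ) (f : Fin r → MvPolynomial (Fin n) k),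
    AlgebraicIndependent k f ∧
      poissonCenter b = ↑(Algebra.adjoin k (Set.range f))

/-- The `j`-th `ξ`-shift of `f`: the coefficient of `tʲ` in `f(x₁ + ξ(x₁)t, …, xₙ + ξ(xₙ)t)`. -/
def xiShift (ξ : Module.Dual k L) (f : MvPolynomial (Fin n) k) (j : ℕ) :
    MvPolynomial (Fin n) k :=
  (MvPolynomial.aeval
    (fun i => Polynomial.C (X i) + Polynomial.C (C (ξ (b i))) * Polynomial.X) f).coeff j

/-- The Mishchenko–Fomenko algebra `Y_ξ(𝔤)`, generated by the `ξ`-shifts of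
all elements of the Poisson center. -/
def mfAlgebra (ξ : Module.Dual k L) : Subalgebra k (MvPolynomial (Fin n) k) :=
  Algebra.adjoin k {g | ∃ f ∈ poissonCenter b, ∃ j : ℕ, g = xiShift b ξ f j}

end PoissonPaper

namespace PoissonPaper

variable {k : Type*} [Field k] {L : Type*} [LieRing L] [LieAlgebra k L]
variable {n : ℕ} (b : Module.Basis (Fin n) k L)

/-- Two elements of the Poisson field `R(𝔤) = Frac(S(𝔤))` Poisson-commute:
writing `u = f/g`, `v = h/l`, the numerator of `{u,v}` vanishes. -/
def PComm (u v : FractionRing (MvPolynomial (Fin n) k)) : Prop :=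
  ∃ f g h l : MvPolynomial (Fin n) k, g ≠ 0 ∧ l ≠ 0 ∧
    u * algebraMap (MvPolynomial (Fin n) k) (FractionRing (MvPolynomial (Fin n) k)) g
      = algebraMap (MvPolynomial (Fin n) k) (FractionRing (MvPolynomial (Fin n) k)) f ∧
    v * algebraMap (MvPolynomial (Fin n) k) (FractionRing (MvPolynomial (Fin n) k)) l
      = algebraMap (MvPolynomial (Fin n) k) (FractionRing (MvPolynomial (Fin n) k)) h ∧
    pbr b f h * g * l - pbr b f l * g * h - pbr b g h * f * l + pbr b g l * f * h = 0

/-- The quotient field `Q(A)` of a subset `A ⊆ S(𝔤)`, as a subfield of `R(𝔤)`. -/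
def qSubfield (A : Set (MvPolynomial (Fin n) k)) :
    Subfield (FractionRing (MvPolynomial (Fin n) k)) :=
  Subfield.closure
    (algebraMap (MvPolynomial (Fin n) k) (FractionRing (MvPolynomial (Fin n) k)) '' A)

/-- `K` is a maximal Poisson commutative subfield of `R(𝔤)` (containing the constants). -/
def IsMaxPCommSubfield (K : Subfield (FractionRing (MvPolynomial (Fin n) k))) : Prop :=
  (∀ c : k,
    algebraMap (MvPolynomial (Fin n) k) (FractionRing (MvPolynomial (Fin n) k)) (C c) ∈ K) ∧
  (∀ u ∈ K, ∀ v ∈ K, PComm b u v) ∧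
  ∀ K' : Subfield (FractionRing (MvPolynomial (Fin n) k)),
    (∀ c : k,
      algebraMap (MvPolynomial (Fin n) k) (FractionRing (MvPolynomial (Fin n) k)) (C c) ∈ K') →
    (∀ u ∈ K', ∀ v ∈ K', PComm b u v) → K ≤ K' → K = K'

end PoissonPaper

namespace PoissonPaper

section Aux

variable {k : Type*} [Field k] {L : Type*} [LieRing L] [LieAlgebra k L]
variable {n : ℕ} (b : Module.Basis (Fin n) k L)

lemma pbr_add_left (f f' g : MvPolynomial (Fin n) k) :
    pbr b (f + f') g = pbr b f g + pbr b f' g := by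
  simp only [pbr, map_add, mul_add, add_mul, Finset.sum_add_distrib]

lemma pbr_add_right (f g g' : MvPolynomial (Fin n) k) :
    pbr b f (g + g') = pbr b f g + pbr b f g' := by
  simp only [pbr, map_add, mul_add, add_mul, Finset.sum_add_distrib]

lemma pbr_mul_left (f f' g : MvPolynomial (Fin n) k) :
    pbr b (f * f') g = f * pbr b f' g + f' * pbr b f g := by
  simp only [pbr, pderiv_mul]
  rw [Finset.mul_sum, Finset.mul_sum, ← Finset.sum_add_distrib]
  refine Finset.sum_congr rfl fun i _ => ?_
  rw [Finset.mul_sum, Finset.mul_sum, ← Finset.sum_add_distrib]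
  refine Finset.sum_congr rfl fun j _ => ?_
  ring

lemma pbr_mul_right (f g g' : MvPolynomial (Fin n) k) :
    pbr b f (g * g') = g * pbr b f g' + g' * pbr b f g := by
  simp only [pbr, pderiv_mul]
  rw [Finset.mul_sum, Finset.mul_sum, ← Finset.sum_add_distrib]
  refine Finset.sum_congr rfl fun i _ => ?_
  rw [Finset.mul_sum, Finset.mul_sum, ← Finset.sum_add_distrib]
  refine Finset.sum_congr rfl fun j _ => ?_
  ring

lemma pbr_C_left (c : k) (g : MvPolynomial (Fin n) k) : pbr b (C c) g = 0 := by
  simp [pbr, pderiv_C]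

lemma pbr_C_right (f : MvPolynomial (Fin n) k) (c : k) : pbr b f (C c) = 0 := by
  simp [pbr, pderiv_C]

lemma pbr_one_left (g : MvPolynomial (Fin n) k) : pbr b 1 g = 0 := by
  simp [pbr, pderiv_one]

lemma pbr_one_right (f : MvPolynomial (Fin n) k) : pbr b f 1 = 0 := by
  simp [pbr, pderiv_one]

lemma pbr_zero_left (g : MvPolynomial (Fin n) k) : pbr b 0 g = 0 := by
  simp [pbr]

lemma pbr_zero_right (f : MvPolynomial (Fin n) k) : pbr b f 0 = 0 := by
  simp [pbr]

lemma pbr_neg_left (f g : MvPolynomial (Fin n) k) : pbr b (-f) g = -pbr b f g := by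
  simp only [pbr, map_neg, neg_mul, mul_neg, Finset.sum_neg_distrib]

lemma toPoly_neg (x : L) : toPoly (n := n) b (-x) = -toPoly b x := by
  simp [toPoly, Finset.sum_neg_distrib]

lemma structMat_skew (i j : Fin n) : structMat b i j = -structMat b j i := by
  show toPoly b ⁅b i, b j⁆ = -toPoly b ⁅b j, b i⁆
  rw [← lie_skew (b j) (b i), toPoly_neg, neg_neg]

lemma pbr_antisymm (f g : MvPolynomial (Fin n) k) : pbr b f g = -pbr b g f := by
  have h1 : pbr b g f = ∑ i, ∑ j, structMat b j i * pderiv j g * pderiv i f := by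
    rw [pbr, Finset.sum_comm]
  rw [pbr, h1, ← Finset.sum_neg_distrib]
  refine Finset.sum_congr rfl fun i _ => ?_
  rw [← Finset.sum_neg_distrib]
  refine Finset.sum_congr rfl fun j _ => ?_
  rw [structMat_skew b i j]; ring

lemma pbr_self [CharZero k] (f : MvPolynomial (Fin n) k) : pbr b f f = 0 := by
  have h := pbr_antisymm b f f
  have h2 : (2 : MvPolynomial (Fin n) k) * pbr b f f = 0 := by linear_combination h
  rcases mul_eq_zero.mp h2 with h | h
  · exact absurd h two_ne_zero
  · exact h

end Aux

section Aux2
set_option synthInstance.maxHeartbeats 1000000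
set_option maxHeartbeats 1000000

variable {k : Type*} [Field k] {L : Type*} [LieRing L] [LieAlgebra k L]
variable {n : ℕ} (b : Module.Basis (Fin n) k L)

/-- Numerator of the Poisson bracket of `f/g` and `h/l`. -/
def pnum (f g h l : MvPolynomial (Fin n) k) : MvPolynomial (Fin n) k :=
  pbr b f h * g * l - pbr b f l * g * h - pbr b g h * f * l + pbr b g l * f * h

lemma pComm_def (u v : FractionRing (MvPolynomial (Fin n) k)) :
    PComm b u v ↔ ∃ f g h l : MvPolynomial (Fin n) k, g ≠ 0 ∧ l ≠ 0 ∧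
      u * algebraMap (MvPolynomial (Fin n) k) (FractionRing (MvPolynomial (Fin n) k)) g
        = algebraMap (MvPolynomial (Fin n) k) (FractionRing (MvPolynomial (Fin n) k)) f ∧
      v * algebraMap (MvPolynomial (Fin n) k) (FractionRing (MvPolynomial (Fin n) k)) l
        = algebraMap (MvPolynomial (Fin n) k) (FractionRing (MvPolynomial (Fin n) k)) h ∧
      pnum b f g h l = 0 := Iff.rfl

lemma algMap_injective :
    Function.Injective
      (algebraMap (MvPolynomial (Fin n) k) (FractionRing (MvPolynomial (Fin n) k))) :=
  IsFractionRing.injective _ _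

lemma exists_rep (v : FractionRing (MvPolynomial (Fin n) k)) :
    ∃ h l : MvPolynomial (Fin n) k, l ≠ 0 ∧
      v * algebraMap (MvPolynomial (Fin n) k) (FractionRing (MvPolynomial (Fin n) k)) l
        = algebraMap (MvPolynomial (Fin n) k) (FractionRing (MvPolynomial (Fin n) k)) h := by
  obtain ⟨⟨h, l⟩, hrep⟩ := IsLocalization.surj (nonZeroDivisors (MvPolynomial (Fin n) k)) v
  exact ⟨h, l, mem_nonZeroDivisors_iff_ne_zero.mp l.2, hrep⟩

/-- The "Poisson centralizer" of `h/l`, as a subfield of the fraction field. -/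
def pcent (h l : MvPolynomial (Fin n) k) :
    Subfield (FractionRing (MvPolynomial (Fin n) k)) where
  carrier := {u | ∃ f g : MvPolynomial (Fin n) k, g ≠ 0 ∧
    u * algebraMap (MvPolynomial (Fin n) k) (FractionRing (MvPolynomial (Fin n) k)) g
      = algebraMap (MvPolynomial (Fin n) k) (FractionRing (MvPolynomial (Fin n) k)) f ∧
    pnum b f g h l = 0}
  zero_mem' := ⟨0, 1, one_ne_zero, by simp, by
    simp [pnum, pbr_zero_left, pbr_one_left]⟩
  one_mem' := ⟨1, 1, one_ne_zero, by simp, by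
    simp [pnum, pbr_one_left]⟩
  add_mem' := by
    rintro u u' ⟨f, g, hg, hu, hN⟩ ⟨f', g', hg', hu', hN'⟩
    refine ⟨f * g' + f' * g, g * g', mul_ne_zero hg hg', ?_, ?_⟩
    · rw [map_mul, map_add, map_mul, map_mul]
      linear_combination (algebraMap (MvPolynomial (Fin n) k)
          (FractionRing (MvPolynomial (Fin n) k)) g') * hu +
        (algebraMap (MvPolynomial (Fin n) k)
          (FractionRing (MvPolynomial (Fin n) k)) g) * hu'
    · have key : pnum b (f * g' + f' * g) (g * g') h l
          = g' ^ 2 * pnum b f g h l + g ^ 2 * pnum b f' g' h l := by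
        simp only [pnum, pbr_add_left, pbr_mul_left]; ring
      rw [key, hN, hN']; ring
  mul_mem' := by
    rintro u u' ⟨f, g, hg, hu, hN⟩ ⟨f', g', hg', hu', hN'⟩
    refine ⟨f * f', g * g', mul_ne_zero hg hg', ?_, ?_⟩
    · rw [map_mul, map_mul]
      linear_combination (u' * algebraMap (MvPolynomial (Fin n) k)
          (FractionRing (MvPolynomial (Fin n) k)) g') * hu +
        (algebraMap (MvPolynomial (Fin n) k)
          (FractionRing (MvPolynomial (Fin n) k)) f) * hu'
    · have key : pnum b (f * f') (g * g') h l
          = f * g * pnum b f' g' h l + f' * g' * pnum b f g h l := by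
        simp only [pnum, pbr_mul_left]; ring
      rw [key, hN, hN']; ring
  neg_mem' := by
    rintro u ⟨f, g, hg, hu, hN⟩
    refine ⟨-f, g, hg, by rw [map_neg]; linear_combination -hu, ?_⟩
    have key : pnum b (-f) g h l = -pnum b f g h l := by
      simp only [pnum, pbr_neg_left]; ring
    rw [key, hN, neg_zero]
  inv_mem' := by
    intro u hu
    obtain ⟨f, g, hg, hu, hN⟩ := hu
    by_cases hu0 : u = 0
    · refine ⟨0, 1, one_ne_zero, by simp [hu0], by simp [pnum, pbr_zero_left, pbr_one_left]⟩
    · have hf : f ≠ 0 := by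
        rintro rfl
        rw [map_zero] at hu
        rcases mul_eq_zero.mp hu with h | h
        · exact hu0 h
        · exact hg (algMap_injective (by rw [h, map_zero]))
      refine ⟨g, f, hf, ?_, ?_⟩
      · rw [← hu, ← mul_assoc, inv_mul_cancel₀ hu0, one_mul]
      · have key : pnum b g f h l = -pnum b f g h l := by
          simp only [pnum]; ring
        rw [key, hN, neg_zero]

lemma pComm_symm {u v : FractionRing (MvPolynomial (Fin n) k)} (h : PComm b u v) :
    PComm b v u := by
  obtain ⟨f, g, h', l, hg, hl, e1, e2, hN⟩ := h
  refine ⟨h', l, f, g, hl, hg, e2, e1, ?_⟩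
  rw [pbr_antisymm b h' f, pbr_antisymm b h' g, pbr_antisymm b l f, pbr_antisymm b l g]
  linear_combination -hN

lemma pnum_rep (f g h l h' l' : MvPolynomial (Fin n) k) (e0 : h * l' = h' * l) :
    l' ^ 2 * pnum b f g h l = l ^ 2 * pnum b f g h' l' := by
  have e1 : pbr b f (h * l') = pbr b f (h' * l) := by rw [e0]
  have e2 : pbr b g (h * l') = pbr b g (h' * l) := by rw [e0]
  rw [pbr_mul_right, pbr_mul_right] at e1 e2
  simp only [pnum]
  linear_combination (l * l' * g) * e1 - (l * l' * f) * e2 +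
    (pbr b g l * f * l' + pbr b g l' * f * l - pbr b f l * g * l' - pbr b f l' * g * l) * e0

lemma mem_pcent_iff {v : FractionRing (MvPolynomial (Fin n) k)}
    {h l : MvPolynomial (Fin n) k} (hl : l ≠ 0)
    (hv : v * algebraMap (MvPolynomial (Fin n) k) (FractionRing (MvPolynomial (Fin n) k)) l
      = algebraMap (MvPolynomial (Fin n) k) (FractionRing (MvPolynomial (Fin n) k)) h)
    {u : FractionRing (MvPolynomial (Fin n) k)} :
    u ∈ pcent b h l ↔ PComm b u v := by
  constructor
  · rintro ⟨f, g, hg, hu, hN⟩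
    exact ⟨f, g, h, l, hg, hl, hu, hv, hN⟩
  · rintro ⟨f, g, h₁, l₁, hg, hl₁, hu, hv₁, hN⟩
    refine ⟨f, g, hg, hu, ?_⟩
    have e0 : h₁ * l = h * l₁ := by
      apply algMap_injective
      rw [map_mul, map_mul, ← hv, ← hv₁]; ring
    have key := pnum_rep b f g h₁ l₁ h l e0
    rw [show pnum b f g h₁ l₁ = 0 from hN, mul_zero] at key
    rcases mul_eq_zero.mp key.symm with h' | h'
    · exact absurd h' (pow_ne_zero _ hl₁)
    · exact h'

lemma closure_pcomm {S₀ : Set (FractionRing (MvPolynomial (Fin n) k))}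
    (hS : ∀ u ∈ S₀, ∀ v ∈ S₀, PComm b u v) :
    ∀ u ∈ Subfield.closure S₀, ∀ v ∈ Subfield.closure S₀, PComm b u v := by
  have step1 : ∀ v ∈ S₀, ∀ u ∈ Subfield.closure S₀, PComm b u v := by
    intro v hv u hu
    obtain ⟨h, l, hl, hrep⟩ := exists_rep v
    have hle : Subfield.closure S₀ ≤ pcent b h l :=
      Subfield.closure_le.mpr fun w hw => (mem_pcent_iff b hl hrep).mpr (hS w hw v hv)
    exact (mem_pcent_iff b hl hrep).mp (hle hu)
  intro u hu v hv
  obtain ⟨h, l, hl, hrep⟩ := exists_rep u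
  have hle : Subfield.closure S₀ ≤ pcent b h l :=
    Subfield.closure_le.mpr fun w hw => (mem_pcent_iff b hl hrep).mpr
      (pComm_symm b (step1 w hw u hu))
  exact pComm_symm b ((mem_pcent_iff b hl hrep).mp (hle hv))

lemma pComm_algebraMap_iff (f g : MvPolynomial (Fin n) k) :
    PComm b (algebraMap (MvPolynomial (Fin n) k) (FractionRing (MvPolynomial (Fin n) k)) f)
      (algebraMap (MvPolynomial (Fin n) k) (FractionRing (MvPolynomial (Fin n) k)) g)
    ↔ pbr b f g = 0 := by
  constructor
  · rintro ⟨f', g', h, l, hg', hl, e1, e2, hN⟩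
    have hf' : f * g' = f' := algMap_injective (by rw [map_mul]; exact e1)
    have hh : g * l = h := algMap_injective (by rw [map_mul]; exact e2)
    subst hf' hh
    have hN' : pnum b (f * g') g' (g * l) l = 0 := hN
    have key : pnum b (f * g') g' (g * l) l = g' ^ 2 * l ^ 2 * pbr b f g := by
      simp only [pnum, pbr_mul_left, pbr_mul_right]; ring
    rw [key] at hN'
    rcases mul_eq_zero.mp hN' with h' | h'
    · rcases mul_eq_zero.mp h' with h'' | h''
      · exact absurd h'' (pow_ne_zero _ hg')
      · exact absurd h'' (pow_ne_zero _ hl)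
    · exact h'
  · intro h0
    refine ⟨f, 1, g, 1, one_ne_zero, one_ne_zero, by rw [map_one, mul_one],
      by rw [map_one, mul_one], ?_⟩
    simp [pbr_one_left, pbr_one_right, h0]

end Aux2

/-- Proposition 18 (i). If `A ⊆ S(𝔤)` is a subalgebra whose quotient field `Q(A)` is a
maximal Poisson commutative subfield of `R(𝔤)`, then the Poisson commutant
`A' = {f ∣ {f,a} = 0 ∀ a ∈ A}` equals `Q(A) ∩ S(𝔤)`, it is a maximal Poisson commutative
subalgebra of `S(𝔤)`, and `Q(A') = Q(A)`. -/
theorem statement8 {k : Type*} [Field k] [IsAlgClosed k] [CharZero k]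
    {L : Type*} [LieRing L] [LieAlgebra k L] [FiniteDimensional k L]
    {n : ℕ} (b : Module.Basis (Fin n) k L)
    (A : Subalgebra k (MvPolynomial (Fin n) k))
    (hA : IsMaxPCommSubfield b (qSubfield ((A : Set (MvPolynomial (Fin n) k))))) :
    {f : MvPolynomial (Fin n) k | ∀ a ∈ A, pbr b f a = 0}
      = algebraMap (MvPolynomial (Fin n) k) (FractionRing (MvPolynomial (Fin n) k)) ⁻¹'
          ↑(qSubfield ((A : Set (MvPolynomial (Fin n) k)))) ∧
    (∃ M : Subalgebra k (MvPolynomial (Fin n) k),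
        (M : Set (MvPolynomial (Fin n) k)) = {f | ∀ a ∈ A, pbr b f a = 0} ∧
        IsMaxPoissonCommutative b M) ∧
    qSubfield {f : MvPolynomial (Fin n) k | ∀ a ∈ A, pbr b f a = 0}
      = qSubfield ((A : Set (MvPolynomial (Fin n) k))) := by
  classical
  set Q := qSubfield ((A : Set (MvPolynomial (Fin n) k))) with hQdef
  have hAQ : ∀ a ∈ A,
      algebraMap (MvPolynomial (Fin n) k) (FractionRing (MvPolynomial (Fin n) k)) a ∈ Q :=
    fun a ha => Subfield.subset_closure ⟨a, ha, rfl⟩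
  have hQcomm := hA.2.1
  have hAcomm : ∀ a ∈ A, ∀ a' ∈ A, pbr b a a' = 0 := fun a ha a' ha' =>
    (pComm_algebraMap_iff b a a').mp (hQcomm _ (hAQ a ha) _ (hAQ a' ha'))
  have part1 : {f : MvPolynomial (Fin n) k | ∀ a ∈ A, pbr b f a = 0}
      = algebraMap (MvPolynomial (Fin n) k) (FractionRing (MvPolynomial (Fin n) k)) ⁻¹'
          ↑Q := by
    ext f
    simp only [Set.mem_setOf_eq, Set.mem_preimage, SetLike.mem_coe]
    constructor
    · intro hf
      set S₀ := algebraMap (MvPolynomial (Fin n) k)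
          (FractionRing (MvPolynomial (Fin n) k)) '' ((A : Set (MvPolynomial (Fin n) k)) ∪ {f})
        with hS₀
      have hgen : ∀ u ∈ S₀, ∀ v ∈ S₀, PComm b u v := by
        rintro _ ⟨x, hx, rfl⟩ _ ⟨y, hy, rfl⟩
        apply (pComm_algebraMap_iff b x y).mpr
        rcases hx with hx | hx
        · rcases hy with hy | hy
          · exact hAcomm x hx y hy
          · rw [Set.mem_singleton_iff] at hy; subst hy
            rw [pbr_antisymm, hf x hx, neg_zero]
        · rw [Set.mem_singleton_iff] at hx; subst hx
          rcases hy with hy | hy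
          · exact hf y hy
          · rw [Set.mem_singleton_iff] at hy; subst hy
            exact pbr_self b _
      have hK'comm := closure_pcomm b hgen
      have hconst : ∀ c : k,
          algebraMap (MvPolynomial (Fin n) k) (FractionRing (MvPolynomial (Fin n) k)) (C c)
            ∈ Subfield.closure S₀ := by
        intro c
        apply Subfield.subset_closure
        refine ⟨C c, Or.inl ?_, rfl⟩
        show C c ∈ A
        rw [show (C c : MvPolynomial (Fin n) k) = algebraMap k _ c from rfl]
        exact A.algebraMap_mem c
      have hQle : Q ≤ Subfield.closure S₀ :=
        Subfield.closure_mono (Set.image_mono Set.subset_union_left)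
      have hEq : Q = Subfield.closure S₀ := hA.2.2 _ hconst hK'comm hQle
      rw [hEq]
      exact Subfield.subset_closure ⟨f, Or.inr rfl, rfl⟩
    · intro hf a ha
      exact (pComm_algebraMap_iff b f a).mp (hQcomm _ hf _ (hAQ a ha))
  have hAsub : (A : Set (MvPolynomial (Fin n) k))
      ⊆ {f : MvPolynomial (Fin n) k | ∀ a ∈ A, pbr b f a = 0} :=
    fun a ha a' ha' => hAcomm a ha a' ha'
  let M : Subalgebra k (MvPolynomial (Fin n) k) :=
    { carrier := {f : MvPolynomial (Fin n) k | ∀ a ∈ A, pbr b f a = 0},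
      mul_mem' := fun {x y} hx hy a ha => by
        rw [pbr_mul_left, hx a ha, hy a ha, mul_zero, mul_zero, add_zero],
      one_mem' := fun a _ => pbr_one_left b a,
      add_mem' := fun {x y} hx hy a ha => by
        rw [pbr_add_left, hx a ha, hy a ha, add_zero],
      zero_mem' := fun a _ => pbr_zero_left b a,
      algebraMap_mem' := fun c a _ => by
        rw [show algebraMap k (MvPolynomial (Fin n) k) c = C c from rfl]
        exact pbr_C_left b c a }
  refine ⟨part1, ⟨M, rfl, ?_, ?_⟩, ?_⟩
  · -- PoissonCommutativeSet
    intro f hf g hg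
    have hf' : algebraMap (MvPolynomial (Fin n) k)
        (FractionRing (MvPolynomial (Fin n) k)) f ∈ Q := by
      have : f ∈ algebraMap (MvPolynomial (Fin n) k)
          (FractionRing (MvPolynomial (Fin n) k)) ⁻¹' ↑Q := part1 ▸ hf
      exact this
    have hg' : algebraMap (MvPolynomial (Fin n) k)
        (FractionRing (MvPolynomial (Fin n) k)) g ∈ Q := by
      have : g ∈ algebraMap (MvPolynomial (Fin n) k)
          (FractionRing (MvPolynomial (Fin n) k)) ⁻¹' ↑Q := part1 ▸ hg
      exact this
    exact (pComm_algebraMap_iff b f g).mp (hQcomm _ hf' _ hg')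
  · -- maximality
    intro B hB hMB
    refine le_antisymm hMB fun {x} hx => ?_
    intro a ha
    exact hB x hx a (hMB (hAsub ha))
  · -- quotient fields agree
    apply le_antisymm
    · apply Subfield.closure_le.mpr
      rintro _ ⟨f, hf, rfl⟩
      have : f ∈ algebraMap (MvPolynomial (Fin n) k)
          (FractionRing (MvPolynomial (Fin n) k)) ⁻¹' ↑Q := part1 ▸ hf
      exact this
    · exact Subfield.closure_mono (Set.image_mono hAsub)


end PoissonPaper
end
end

section
/- For every Lie subalgebra 𝔥 of 𝔤, one has c(𝔥) ≤ c(𝔤). -/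
open MvPolynomial

noncomputable section

namespace PoissonPaper

/-- Auxiliary: kernel of a composition has dimension at most the sum of kernel dims. -/
lemma finrank_ker_comp_le' {k V W X : Type*} [Field k] [AddCommGroup V] [Module k V]
    [AddCommGroup W] [Module k W] [AddCommGroup X] [Module k X]
    [FiniteDimensional k V] [FiniteDimensional k W]
    (f : V →ₗ[k] W) (g : W →ₗ[k] X) :
    Module.finrank k (LinearMap.ker (g ∘ₗ f)) ≤
      Module.finrank k (LinearMap.ker f) + Module.finrank k (LinearMap.ker g) := by
  have hmem : ∀ x ∈ LinearMap.ker (g ∘ₗ f), f x ∈ LinearMap.ker g := by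
    intro x hx
    simpa [LinearMap.mem_ker] using hx
  set f' : LinearMap.ker (g ∘ₗ f) →ₗ[k] LinearMap.ker g :=
    f.restrict hmem with hf'
  have h1 : Module.finrank k (LinearMap.range f') + Module.finrank k (LinearMap.ker f')
      = Module.finrank k (LinearMap.ker (g ∘ₗ f)) := LinearMap.finrank_range_add_finrank_ker f'
  have h2 : Module.finrank k (LinearMap.range f') ≤ Module.finrank k (LinearMap.ker g) :=
    Submodule.finrank_le _
  have h3 : Module.finrank k (LinearMap.ker f') ≤ Module.finrank k (LinearMap.ker f) := by
    have hj : ∀ x : LinearMap.ker f', ((x : LinearMap.ker (g ∘ₗ f)) : V) ∈ LinearMap.ker f := by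
      intro x
      have h := x.2
      rw [LinearMap.mem_ker] at h ⊢
      exact congrArg (Subtype.val) h
    have : Function.Injective fun x : LinearMap.ker f' =>
        (⟨((x : LinearMap.ker (g ∘ₗ f)) : V), hj x⟩ : LinearMap.ker f) := by
      intro a b hab
      have h2 := congrArg Subtype.val hab
      dsimp only at h2
      exact Subtype.ext (Subtype.ext h2)
    exact LinearMap.finrank_le_finrank_of_injective
      (f := { toFun := fun x : LinearMap.ker f' =>
                (⟨((x : LinearMap.ker (g ∘ₗ f)) : V), hj x⟩ : LinearMap.ker f),
              map_add' := fun a b => rfl,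
              map_smul' := fun c a => rfl }) this
  omega

/-- The linear map `x ↦ ξ ∘ ad x` associated to a linear form `ξ`. -/
def bform {k L : Type*} [Field k] [LieRing L] [LieAlgebra k L] (ξ : Module.Dual k L) :
    L →ₗ[k] Module.Dual k L where
  toFun x :=
    { toFun := fun y => ξ ⁅x, y⁆
      map_add' := fun y z => by rw [lie_add, map_add]
      map_smul' := fun c y => by rw [lie_smul, map_smul]; rfl }
  map_add' x y := by ext z; simp [add_lie]
  map_smul' c x := by ext z; simp [smul_lie]

theorem statement10' {k : Type*} [Field k] [IsAlgClosed k] [CharZero k]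
    {L : Type*} [LieRing L] [LieAlgebra k L] [FiniteDimensional k L]
    (H : LieSubalgebra k L) :
    cIndex k ↥H ≤ cIndex k L := by
  classical
  -- pick ξ achieving the index of L
  have hne : (Set.range fun ξ : Module.Dual k L =>
      Module.finrank k (lieStab k L ξ)).Nonempty := ⟨_, ⟨0, rfl⟩⟩
  obtain ⟨ξ, hξ⟩ := Nat.sInf_mem hne
  have hξ' : Module.finrank k (lieStab k L ξ) = lieIndex k L := hξ
  let ι : (↥H) →ₗ[k] L := (H.incl : (↥H) →ₗ⁅k⁆ L).toLinearMap
  have hι : Function.Injective ι := by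
    intro a b hab
    exact Subtype.ext hab
  let θ : (↥H) →ₗ[k] Module.Dual k L := (bform ξ) ∘ₗ ι
  let r : Module.Dual k L →ₗ[k] Module.Dual k (↥H) := ι.dualMap
  let ψ : (↥H) →ₗ[k] Module.Dual k (↥H) := r ∘ₗ θ
  let η : Module.Dual k (↥H) := ξ ∘ₗ ι
  -- identify the stabilizer of η with ker ψ
  have hstab : lieStab k (↥H) η = LinearMap.ker ψ := by
    ext x
    have h1 : x ∈ lieStab k (↥H) η ↔ ∀ y : ↥H, η ⁅x, y⁆ = 0 := Iff.rfl
    have h2 : x ∈ LinearMap.ker ψ ↔ ∀ y : ↥H, ξ ⁅ι x, ι y⁆ = 0 := by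
      rw [LinearMap.mem_ker]
      constructor
      · intro h y
        exact congrFun (congrArg (DFunLike.coe) h) y
      · intro h
        ext y
        exact h y
    rw [h1, h2]
    apply forall_congr'
    intro y
    have : η ⁅x, y⁆ = ξ ⁅ι x, ι y⁆ := by
      show ξ (ι ⁅x, y⁆) = ξ ⁅ι x, ι y⁆
      congr 1
    rw [this]
  -- the index of H is at most dim of this stabilizer
  have hile : lieIndex k (↥H) ≤ Module.finrank k (LinearMap.ker ψ) := by
    rw [← hstab]
    exact Nat.sInf_le ⟨η, rfl⟩
  -- ker ψ bound
  have hker : Module.finrank k (LinearMap.ker ψ) ≤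
      Module.finrank k (LinearMap.ker θ) + Module.finrank k (LinearMap.ker r) :=
    finrank_ker_comp_le' θ r
  -- ker θ embeds in the stabilizer of ξ
  have hθ : Module.finrank k (LinearMap.ker θ) ≤ Module.finrank k (lieStab k L ξ) := by
    have hj : ∀ x : LinearMap.ker θ, ι (x : ↥H) ∈ lieStab k L ξ := by
      intro x
      intro y
      have h := x.2
      rw [LinearMap.mem_ker] at h
      exact congrFun (congrArg (DFunLike.coe) h) y
    have hinj : Function.Injective fun x : LinearMap.ker θ =>
        (⟨ι (x : ↥H), hj x⟩ : lieStab k L ξ) := by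
      intro a b hab
      have h2 := congrArg Subtype.val hab
      dsimp only at h2
      exact Subtype.ext (hι h2)
    exact LinearMap.finrank_le_finrank_of_injective
      (f := { toFun := fun x : LinearMap.ker θ => (⟨ι (x : ↥H), hj x⟩ : lieStab k L ξ),
              map_add' := fun a b => by ext; simp,
              map_smul' := fun c a => by ext; simp }) hinj
  -- ker r has dimension dim L - dim H
  have hr : Module.finrank k (LinearMap.ker r) + Module.finrank k (↥H)
      = Module.finrank k L := by
    have hsurj : Function.Surjective r := ι.dualMap_surjective_of_injective hι
    have h1 := LinearMap.finrank_range_add_finrank_ker r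
    have h2 : LinearMap.range r = ⊤ := LinearMap.range_eq_top.mpr hsurj
    rw [h2] at h1
    have h3 : Module.finrank k (⊤ : Submodule k (Module.Dual k ↥H))
        = Module.finrank k (↥H) := by
      rw [finrank_top, Subspace.dual_finrank_eq]
    have h4 : Module.finrank k (Module.Dual k L) = Module.finrank k L :=
      Subspace.dual_finrank_eq
    rw [h3, h4] at h1
    omega
  have key : Module.finrank k (↥H) + lieIndex k (↥H)
      ≤ Module.finrank k L + lieIndex k L := by omega
  exact Nat.div_le_div_right key

/-- Theorem 22 (1). For every Lie subalgebra `𝔥` of `𝔤`: `c(𝔥) ≤ c(𝔤)`. -/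
theorem statement10 {k : Type*} [Field k] [IsAlgClosed k] [CharZero k]
    {L : Type*} [LieRing L] [LieAlgebra k L] [FiniteDimensional k L]
    (H : LieSubalgebra k L) :
    cIndex k ↥H ≤ cIndex k L := statement10' H

end PoissonPaper
end
end

section
/- Let 𝔤 be the 7-dimensional nilpotent Lie algebra 𝔤_{7,1.01(i)} over k with basis x_1, ..., x_7 and nonzero brackets [x_1,x_2] = x_4, [x_1,x_4] = x_5, [x_1,x_5] = x_6, [x_1,x_6] = x_7, [x_2,x_3] = x_5 + x_7, [x_3,x_4] = −x_6, [x_3,x_5] = −x_7. Set f = x_6³ − 3x_5x_6x_7 + 3x_4x_7², g = x_6⁴ − 4x_5x_6²x_7 − 2x_6²x_7² + 2x_5²x_7² + 4x_4x_6x_7² + 4x_5x_7³ − 4x_2x_7³, and h = (f⁴ − g³ − 6x_7²f²g)/x_7³ ∈ S(𝔤). If P is a polynomial in three variables X, Y, Z with coefficients in k such that P(f, g, h) is divisible by x_7 in S(𝔤), then P(X, Y, Z) is divisible by X⁴ − Y³ in k[X, Y, Z]. -/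
open MvPolynomial

noncomputable section

namespace PoissonPaper

/-- `f = x₆³ - 3x₅x₆x₇ + 3x₄x₇²` (variables `xᵢ = X (i-1)`, so `S(𝔤) = k[x₁,…,x₇]`
is identified with `MvPolynomial (Fin 7) k`). -/
def fpoly (k : Type*) [Field k] : MvPolynomial (Fin 7) k :=
  X 5 ^ 3 - 3 * X 4 * X 5 * X 6 + 3 * X 3 * X 6 ^ 2

/-- `g = x₆⁴ - 4x₅x₆²x₇ - 2x₆²x₇² + 2x₅²x₇² + 4x₄x₆x₇² + 4x₅x₇³ - 4x₂x₇³`. -/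
def gpoly (k : Type*) [Field k] : MvPolynomial (Fin 7) k :=
  X 5 ^ 4 - 4 * X 4 * X 5 ^ 2 * X 6 - 2 * X 5 ^ 2 * X 6 ^ 2 + 2 * X 4 ^ 2 * X 6 ^ 2
    + 4 * X 3 * X 5 * X 6 ^ 2 + 4 * X 4 * X 6 ^ 3 - 4 * X 1 * X 6 ^ 3

lemma primeX3 {k : Type*} [Field k] (i : Fin 3) : Prime (X i : MvPolynomial (Fin 3) k) := by
  have h0 : Prime (X 0 : MvPolynomial (Fin 3) k) := by
    rw [← MulEquiv.prime_iff (finSuccEquiv k 2).toMulEquiv]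
    have : (finSuccEquiv k 2).toMulEquiv (X 0) = Polynomial.X := by
      simp [finSuccEquiv_X_zero]
    rw [this]
    exact Polynomial.prime_X
  rw [← MulEquiv.prime_iff (renameEquiv k (Equiv.swap (0 : Fin 3) i)).toMulEquiv]
  have : (renameEquiv k (Equiv.swap (0 : Fin 3) i)).toMulEquiv (X i)
      = (X 0 : MvPolynomial (Fin 3) k) := by
    simp [renameEquiv_apply, rename_X, Equiv.swap_apply_right]
  rw [this]
  exact h0

lemma sqfD {k : Type*} [Field k] [CharZero k] :
    Squarefree (X 0 ^ 4 - X 1 ^ 3 : MvPolynomial (Fin 3) k) := by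
  intro q hq
  by_contra hqu
  obtain ⟨r, hr⟩ := hq
  have hderiv : ∀ i : Fin 3, q ∣ pderiv i (X 0 ^ 4 - X 1 ^ 3 : MvPolynomial (Fin 3) k) := by
    intro i
    refine ⟨2 * pderiv i q * r + q * pderiv i r, ?_⟩
    rw [hr]
    simp only [pderiv_mul]
    ring
  have pd0 : pderiv (0 : Fin 3) (X 0 ^ 4 - X 1 ^ 3 : MvPolynomial (Fin 3) k)
      = 4 * X 0 ^ 3 := by
    simp [pderiv_pow, pderiv_X_self, pderiv_X_of_ne]
  have pd1 : pderiv (1 : Fin 3) (X 0 ^ 4 - X 1 ^ 3 : MvPolynomial (Fin 3) k)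
      = -(3 * X 1 ^ 2) := by
    simp [pderiv_pow, pderiv_X_self, pderiv_X_of_ne]
  have h1 : q ∣ (4 : MvPolynomial (Fin 3) k) * X 0 ^ 3 := by
    have := hderiv 0; rwa [pd0] at this
  have h2 : q ∣ (3 : MvPolynomial (Fin 3) k) * X 1 ^ 2 := by
    have := hderiv 1; rw [pd1] at this; exact (dvd_neg).mp this
  have hX : q ∣ (X 0 : MvPolynomial (Fin 3) k) ^ 3 := by
    have e : (X 0 : MvPolynomial (Fin 3) k) ^ 3
        = C ((4 : k)⁻¹) * ((4 : MvPolynomial (Fin 3) k) * X 0 ^ 3) := by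
      rw [← map_ofNat (C : k →+* MvPolynomial (Fin 3) k) 4, ← mul_assoc, ← C_mul]
      norm_num
    rw [e]
    exact h1.mul_left _
  have hY : q ∣ (X 1 : MvPolynomial (Fin 3) k) ^ 2 := by
    have e : (X 1 : MvPolynomial (Fin 3) k) ^ 2
        = C ((3 : k)⁻¹) * ((3 : MvPolynomial (Fin 3) k) * X 1 ^ 2) := by
      rw [← map_ofNat (C : k →+* MvPolynomial (Fin 3) k) 3, ← mul_assoc, ← C_mul]
      norm_num
    rw [e]
    exact h2.mul_left _
  have hq0 : q ≠ 0 := by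
    rintro rfl
    have : (X 0 : MvPolynomial (Fin 3) k) ^ 3 = 0 := zero_dvd_iff.mp hX
    exact pow_ne_zero 3 (X_ne_zero (0 : Fin 3)) this
  obtain ⟨p, hpi, hpq⟩ := WfDvdMonoid.exists_irreducible_factor hqu hq0
  have hpp : Prime p := (UniqueFactorizationMonoid.irreducible_iff_prime).mp hpi
  have hp0 : p ∣ (X 0 : MvPolynomial (Fin 3) k) := hpp.dvd_of_dvd_pow (hpq.trans hX)
  have hp1 : p ∣ (X 1 : MvPolynomial (Fin 3) k) := hpp.dvd_of_dvd_pow (hpq.trans hY)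
  have hassoc : Associated p (X 0 : MvPolynomial (Fin 3) k) :=
    hpi.associated_of_dvd (primeX3 0).irreducible hp0
  have hX01 : (X 0 : MvPolynomial (Fin 3) k) ∣ X 1 := hassoc.symm.dvd.trans hp1
  obtain ⟨c, hc⟩ := hX01
  have := congrArg (eval ![0, 1, 0]) hc
  simp at this

/-- Lemma A of Example 34. With `f, g` as above and `h = (f⁴ - g³ - 6x₇²f²g)/x₇³` in
`S(𝔤) = k[x₁, …, x₇]`: if `P ∈ k[X,Y,Z]` is such that `P(f,g,h)` is divisible by `x₇`,
then `P` is divisible by `X⁴ - Y³` in `k[X,Y,Z]`. -/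
theorem statement19 {k : Type*} [Field k] [IsAlgClosed k] [CharZero k]
    (h : MvPolynomial (Fin 7) k)
    (hh : h * X 6 ^ 3 = fpoly k ^ 4 - gpoly k ^ 3 - 6 * X 6 ^ 2 * fpoly k ^ 2 * gpoly k)
    (P : MvPolynomial (Fin 3) k)
    (hdvd : (X 6 : MvPolynomial (Fin 7) k) ∣ MvPolynomial.aeval ![fpoly k, gpoly k, h] P) :
    (X 0 ^ 4 - X 1 ^ 3 : MvPolynomial (Fin 3) k) ∣ P := by
  classical
  set tv : Fin 7 → MvPolynomial (Fin 3) k := ![0, X 2, 0, 0, 0, X 0, X 1] with htv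
  have t1 : tv 1 = X 2 := rfl
  have t3 : tv 3 = 0 := rfl
  have t4 : tv 4 = 0 := rfl
  have t5 : tv 5 = X 0 := rfl
  have t6 : tv 6 = X 1 := rfl
  have hf : aeval tv (fpoly k) = (X 0 : MvPolynomial (Fin 3) k) ^ 3 := by
    simp only [fpoly, map_sub, map_add, map_mul, map_pow, map_ofNat, aeval_X, t3, t4, t5, t6]
    ring
  have hg : aeval tv (gpoly k) =
      (X 0 : MvPolynomial (Fin 3) k) ^ 4 - 2 * X 0 ^ 2 * X 1 ^ 2 - 4 * X 2 * X 1 ^ 3 := by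
    simp only [gpoly, map_sub, map_add, map_mul, map_pow, map_ofNat, aeval_X,
      t1, t3, t4, t5, t6]
    ring
  set H3 : MvPolynomial (Fin 3) k :=
    64 * X 1 ^ 6 * X 2 ^ 3 + 96 * X 0 ^ 2 * X 1 ^ 5 * X 2 ^ 2
      - 48 * X 0 ^ 4 * X 1 ^ 3 * X 2 ^ 2 + 48 * X 0 ^ 4 * X 1 ^ 4 * X 2
      - 24 * X 0 ^ 6 * X 1 ^ 2 * X 2 + 8 * X 0 ^ 6 * X 1 ^ 3 + 12 * X 0 ^ 8 * X 2 with hH3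
  have hth : aeval tv h = H3 := by
    have e1 := congrArg (aeval tv) hh
    simp only [map_mul, map_sub, map_pow, map_ofNat, aeval_X] at e1
    rw [hf, hg, t6] at e1
    refine mul_right_cancel₀ (pow_ne_zero 3 (X_ne_zero (1 : Fin 3))) ?_
    rw [e1, hH3]
    ring
  have aev : ∀ (x : Fin 3 → k) (p : MvPolynomial (Fin 3) k), aeval x p = eval x p := by
    intro x p
    rw [← coe_aeval_eq_eval]
    rfl
  -- pointwise vanishing on the parametrized set
  have key : ∀ u w : k, eval ![u ^ 3, u ^ 4, 12 * w * u ^ 8] P = 0 := by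
    intro u w
    obtain ⟨B, hB⟩ := hdvd
    set vv : Fin 3 → MvPolynomial (Fin 7) k := ![fpoly k, gpoly k, h] with hvv
    set pt : Fin 3 → k := ![u, 0, w] with hpt
    have s1 : (aeval tv) ((aeval vv) P) = aeval (fun i => aeval tv (vv i)) P := by
      rw [← AlgHom.comp_apply, comp_aeval]
    have s2 : (aeval pt) ((aeval (fun i => aeval tv (vv i))) P)
        = aeval (fun i => aeval pt (aeval tv (vv i))) P := by
      rw [← AlgHom.comp_apply, comp_aeval]
    have hfun : (fun i => aeval pt (aeval tv (vv i))) = fun i =>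
        (![u ^ 3, u ^ 4, 12 * w * u ^ 8] : Fin 3 → k) i := by
      have p0 : pt 0 = u := rfl
      have p1 : pt 1 = 0 := rfl
      have p2 : pt 2 = w := rfl
      funext i
      fin_cases i
      · show aeval pt (aeval tv (fpoly k)) = u ^ 3
        rw [hf, map_pow, aeval_X, p0]
      · show aeval pt (aeval tv (gpoly k)) = u ^ 4
        rw [hg]
        simp only [map_sub, map_mul, map_pow, map_ofNat, aeval_X, p0, p1, p2]
        ring
      · show aeval pt (aeval tv h) = 12 * w * u ^ 8
        rw [hth, hH3]
        simp only [map_add, map_sub, map_mul, map_pow, map_ofNat, aeval_X, p0, p1, p2]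
        ring
    have hz : aeval pt (aeval tv ((aeval vv) P)) = 0 := by
      rw [hB, map_mul, map_mul, aeval_X, t6, aeval_X]
      have : pt 1 = 0 := rfl
      rw [this]
      ring
    rw [s1, s2, hfun] at hz
    rw [← aev]
    exact hz
  -- vanishing at (0,0,z)
  have h00 : ∀ z : k, eval ![0, 0, z] P = 0 := by
    intro z
    set q : Polynomial k :=
      aeval ![Polynomial.X ^ 3, Polynomial.X ^ 4, Polynomial.C z] P with hqdef
    have hev : ∀ u : k, Polynomial.eval u q = eval ![u ^ 3, u ^ 4, z] P := by
      intro u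
      have h1 : Polynomial.aeval u q = aeval (fun i =>
          Polynomial.aeval u ((![Polynomial.X ^ 3, Polynomial.X ^ 4, Polynomial.C z]) i)) P := by
        rw [hqdef, ← AlgHom.comp_apply, comp_aeval]
      have h2 : Polynomial.aeval u q = Polynomial.eval u q := by
        rw [Polynomial.aeval_def, Polynomial.eval₂_eq_eval_map, Algebra.algebraMap_self,
          Polynomial.map_id]
      have hfun2 : (fun i =>
          Polynomial.aeval u ((![Polynomial.X ^ 3, Polynomial.X ^ 4, Polynomial.C z]) i))
          = (![u ^ 3, u ^ 4, z] : Fin 3 → k) := by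
        funext i
        fin_cases i <;> simp
      rw [← h2, h1, hfun2]
      exact aev _ _
    have hq0 : q = 0 := by
      apply Polynomial.eq_zero_of_infinite_isRoot
      apply Set.Infinite.mono (s := {x : k | x ≠ 0})
      · intro u hu
        have hu' : (u : k) ≠ 0 := hu
        have h12 : (12 : k) * u ^ 8 ≠ 0 :=
          mul_ne_zero (by norm_num) (pow_ne_zero _ hu')
        have := key u (z / (12 * u ^ 8))
        rw [show (12 : k) * (z / (12 * u ^ 8)) * u ^ 8 = z by field_simp] at this
        simpa [Polynomial.IsRoot, hev] using this
      · have : ({x : k | x ≠ 0}) = ({0} : Set k)ᶜ := by ext x; simp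
        rw [this]
        exact (Set.finite_singleton 0).infinite_compl
    have := hev 0
    rw [hq0] at this
    simpa using this.symm
  -- every point of the zero locus of D is reached
  have hzero : ∀ x : Fin 3 → k, (x 0) ^ 4 = (x 1) ^ 3 → eval x P = 0 := by
    intro x hx
    have hxeq : x = ![x 0, x 1, x 2] := by
      funext i; fin_cases i <;> rfl
    by_cases h0 : x 0 = 0
    · have h1 : x 1 = 0 := by
        have : (x 1) ^ 3 = 0 := by rw [← hx, h0]; ring
        exact pow_eq_zero_iff (by norm_num) |>.mp this
      rw [hxeq, h0, h1]
      exact h00 (x 2)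
    · have h1 : x 1 ≠ 0 := by
        intro h1
        apply h0
        have : (x 0) ^ 4 = 0 := by rw [hx, h1]; ring
        exact pow_eq_zero_iff (by norm_num) |>.mp this
      set u : k := x 1 / x 0 with hu
      have hu0 : u ≠ 0 := div_ne_zero h1 h0
      have hu3 : u ^ 3 = x 0 := by
        rw [hu]
        field_simp
        rw [← hx]
      have hu4 : u ^ 4 = x 1 := by
        rw [hu]
        field_simp
        rw [hx]
      set w : k := x 2 / (12 * u ^ 8) with hw
      have h12 : (12 : k) * u ^ 8 ≠ 0 :=
        mul_ne_zero (by norm_num) (pow_ne_zero _ hu0)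
      have hwz : 12 * w * u ^ 8 = x 2 := by
        rw [hw]; field_simp
      have := key u w
      rw [hu3, hu4, hwz] at this
      rw [hxeq]
      exact this
  -- Nullstellensatz
  set D : MvPolynomial (Fin 3) k := X 0 ^ 4 - X 1 ^ 3 with hD
  have hmem : P ∈ (Ideal.span ({D} : Set (MvPolynomial (Fin 3) k))).radical := by
    rw [← vanishingIdeal_zeroLocus_eq_radical (K := k)]
    rw [mem_vanishingIdeal_iff]
    intro x hx
    have hDx : eval x D = 0 := hx D (Ideal.subset_span rfl)
    apply hzero
    have hsub : (x 0) ^ 4 - (x 1) ^ 3 = 0 := by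
      rw [← hDx, hD]; simp
    exact sub_eq_zero.mp hsub
  obtain ⟨n, hn⟩ := hmem
  have hDP : D ∣ P ^ n := Ideal.mem_span_singleton.mp hn
  rcases Nat.eq_zero_or_pos n with hn0 | hn0
  · subst hn0
    simp only [pow_zero] at hDP
    exact (isUnit_of_dvd_one hDP).dvd
  · exact (sqfD.dvd_pow_iff_dvd hn0.ne').mp hDP

end PoissonPaper
end
end
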